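/- Let k ≥ 2, let x : ℕ → ℤ be a k-automatic sequence (i.e., its k-kernel is finite), let α be an irrational real number, let ρ ∈ ℝ, and let a : ℕ → ℤ be the Sturmian sequence a(n) = ⌊α(n+1) + ρ⌋ − ⌊αn + ρ⌋ − ⌊α⌋. Then there exists a constant C such that every word which is a factor of both x and a has length at most C. -/

import Mathlib

lemma fract_irrational {γ : ℝ} (hγ : Irrational γ) : Irrational (Int.fract γ) := by
  rw [Int.fract]; exact hγ.sub_intCast _

lemma small_step {γ : ℝ} (hγ : Irrational γ) {ε : ℝ} (hε : 0 < ε) (hε1 : ε ≤ 1) :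
    ∃ m : ℕ, 1 ≤ m ∧ 0 < Int.fract (γ * m) ∧ Int.fract (γ * m) < ε := by
  have hirr : ∀ m : ℕ, 1 ≤ m → Irrational (Int.fract (γ * m)) := fun m hm =>
    fract_irrational (hγ.mul_natCast (by omega))
  have hpos : ∀ m : ℕ, 1 ≤ m → 0 < Int.fract (γ * m) := by
    intro m hm
    rcases lt_or_eq_of_le (Int.fract_nonneg (γ * m)) with h | h
    · exact h
    · exact absurd h.symm (by simpa using (hirr m hm).ne_int 0)
  -- Dirichlet pigeonhole
  set R : ℕ := ⌈ε⁻¹⌉₊ with hR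
  have hR1 : 1 ≤ R := Nat.one_le_ceil_iff.mpr (by positivity)
  have hRε : ε⁻¹ ≤ R := Nat.le_ceil _
  have hRpos : (0:ℝ) < R := by exact_mod_cast hR1
  have h1R : 1 / (R:ℝ) ≤ ε := by
    rw [div_le_iff₀ hRpos]
    calc (1:ℝ) = ε * ε⁻¹ := by field_simp
    _ ≤ ε * R := by nlinarith
  have maps : ∀ i ∈ Finset.range (R+1),
      (⌊Int.fract (γ * i) * R⌋).toNat ∈ Finset.range R := by
    intro i _
    rw [Finset.mem_range]
    have h1 : Int.fract (γ * i) * R < R := by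
      nlinarith [Int.fract_lt_one (γ * i), Int.fract_nonneg (γ * i)]
    have h2 : (⌊Int.fract (γ * i) * R⌋ : ℝ) < R := lt_of_le_of_lt (Int.floor_le _) h1
    have : ⌊Int.fract (γ * i) * R⌋ < (R:ℤ) := by exact_mod_cast h2
    omega
  obtain ⟨i1, hi1, i2, hi2, hne, heq⟩ :=
    Finset.exists_ne_map_eq_of_card_lt_of_maps_to (by simp) maps
  wlog hlt : i1 < i2 generalizing i1 i2
  · exact this i2 hi2 i1 hi1 hne.symm heq.symm (by omega)
  have hfz : ∀ i : ℕ, (0:ℤ) ≤ ⌊Int.fract (γ * i) * R⌋ := fun i =>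
    Int.floor_nonneg.mpr (mul_nonneg (Int.fract_nonneg _) hRpos.le)
  have heqf : ⌊Int.fract (γ * i1) * R⌋ = ⌊Int.fract (γ * i2) * R⌋ := by
    have := hfz i1; have := hfz i2; omega
  have hdiff : |Int.fract (γ * i2) - Int.fract (γ * i1)| < ε := by
    have habs := Int.abs_sub_lt_one_of_floor_eq_floor heqf.symm
    rw [← sub_mul, abs_mul, abs_of_pos hRpos] at habs
    have : |Int.fract (γ * i2) - Int.fract (γ * i1)| < 1 / R := by
      rw [lt_div_iff₀ hRpos]; exact habs
    linarith
  -- the difference m0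
  set m0 : ℕ := i2 - i1 with hm0
  have hm01 : 1 ≤ m0 := by omega
  set u : ℝ := Int.fract (γ * i2) - Int.fract (γ * i1) with hu
  have hkey : Int.fract (γ * m0) = Int.fract u := by
    have hmr : ((m0:ℝ)) = (i2:ℝ) - (i1:ℝ) := by
      rw [hm0]; push_cast [Nat.cast_sub hlt.le]; ring
    have h2 : γ * (m0:ℝ) = u + ((⌊γ * i2⌋ - ⌊γ * i1⌋ : ℤ) : ℝ) := by
      rw [hmr, hu]; simp only [Int.fract]; push_cast; ring
    rw [h2, Int.fract_add_intCast]
  have hune : u ≠ 0 := by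
    intro h0
    have : Int.fract (γ * m0) = 0 := by rw [hkey, h0, Int.fract_zero]
    exact absurd this (ne_of_gt (hpos m0 hm01))
  have hu1 : |u| < 1 := by
    have := Int.fract_nonneg (γ * i1); have := Int.fract_lt_one (γ * i1)
    have := Int.fract_nonneg (γ * i2); have := Int.fract_lt_one (γ * i2)
    rw [abs_lt]; constructor <;> simp only [hu] <;> linarith
  rcases lt_or_gt_of_ne hune with hneg | hposu
  · -- u < 0 : fract (γ m0) = 1 + u ∈ (1-ε,1); iterate to flip direction
    have hum1 : -1 < u := by have := abs_lt.mp hu1; linarith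
    have hfm0 : Int.fract (γ * m0) = 1 + u := by
      rw [hkey, Int.fract]
      have hfl : ⌊u⌋ = -1 := by
        rw [Int.floor_eq_iff]; push_cast; constructor <;> linarith
      rw [hfl]; push_cast; ring
    set η : ℝ := -u with hη
    have hη0 : 0 < η := by simp [hη]; linarith
    have hηε : η < ε := by have := abs_lt.mp hdiff; simp only [hη]; linarith
    obtain ⟨j0, hj01, hj0l, hj0u⟩ : ∃ j0 : ℕ, 1 ≤ j0 ∧ 1 - ε < j0 * η ∧ (j0:ℝ) * η < 1 := by
      refine ⟨⌊(1-ε)/η⌋₊ + 1, by omega, ?_, ?_⟩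
      · have h := Nat.lt_floor_add_one ((1-ε)/η)
        have h2 : (1-ε)/η < ((⌊(1-ε)/η⌋₊ + 1 : ℕ):ℝ) := by push_cast; linarith
        calc 1 - ε = ((1-ε)/η) * η := by field_simp
        _ < ((⌊(1-ε)/η⌋₊ + 1 : ℕ):ℝ) * η := by nlinarith
      · rcases le_or_gt 0 ((1-ε)/η) with hz | hz
        · have h := Nat.floor_le hz
          have h2 : ((⌊(1-ε)/η⌋₊ + 1 : ℕ):ℝ) ≤ (1-ε)/η + 1 := by push_cast; linarith
          have h3 : ((⌊(1-ε)/η⌋₊ + 1 : ℕ):ℝ) * η ≤ ((1-ε)/η + 1) * η := by nlinarith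
          have he : ((1-ε)/η + 1) * η = (1-ε) + η := by field_simp
          linarith [he ▸ h3]
        · have h0 : ⌊(1-ε)/η⌋₊ = 0 := Nat.floor_of_nonpos hz.le
          rw [h0]; push_cast; linarith
    refine ⟨m0 * j0, by exact Nat.one_le_iff_ne_zero.mpr (by positivity), ?_, ?_⟩ <;>
    · have hcast : γ * ((m0 * j0 : ℕ):ℝ) = -((j0:ℝ) * η) + ((j0 * (⌊γ * (m0:ℝ)⌋ + 1) : ℤ):ℝ) := by
        have hg : γ * (m0:ℝ) = (⌊γ * (m0:ℝ)⌋ : ℝ) + (1 + u) := by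
          rw [← hfm0, Int.fract]; ring
        push_cast
        rw [hη]
        linear_combination (j0:ℝ) * hg
      have hfr : Int.fract (γ * ((m0 * j0 : ℕ):ℝ)) = 1 - j0 * η := by
        rw [hcast, Int.fract_add_intCast, Int.fract]
        have hj0η : (0:ℝ) < (j0:ℝ) * η := by positivity
        have hfl2 : ⌊-((j0:ℝ) * η)⌋ = -1 := by
          rw [Int.floor_eq_iff]; push_cast; constructor <;> linarith
        rw [hfl2]; push_cast; ring
      rw [hfr]
      linarith
  · -- u > 0 : done with m0
    refine ⟨m0, hm01, hpos m0 hm01, ?_⟩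
    rw [hkey, Int.fract_eq_self.mpr ⟨hposu.le, lt_of_abs_lt hu1⟩]
    exact lt_of_abs_lt (by rwa [hu] at hdiff)


lemma rot_hit {γ : ℝ} (hγ : Irrational γ) {t0 ε : ℝ} (ht0 : 0 ≤ t0) (hε : 0 < ε)
    (ht1 : t0 + ε ≤ 1) :
    ∃ N : ℕ, ∀ θ : ℝ, ∃ j ≤ N, Int.fract (γ * j + θ) ∈ Set.Ico t0 (t0 + ε) := by
  obtain ⟨m, hm1, hη0, hηε⟩ := small_step hγ hε (by linarith)
  set η := Int.fract (γ * m) with hηdef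
  refine ⟨m * (⌈1/η⌉₊ + 1), ?_⟩
  intro θ
  set M0 : ℤ := ⌈θ - t0⌉ with hM0
  have hz0 : 0 ≤ (M0:ℝ) + t0 - θ := by
    have := Int.le_ceil (θ - t0); rw [← hM0] at this; linarith
  have hz1 : (M0:ℝ) + t0 - θ < 1 := by
    have := Int.ceil_lt_add_one (θ - t0); rw [← hM0] at this; linarith
  set z : ℝ := (M0:ℝ) + t0 - θ with hz
  set j' : ℕ := ⌈z/η⌉₊ with hj'
  have h1 : z ≤ j' * η := by
    have := Nat.le_ceil (z/η)
    calc z = (z/η) * η := by field_simp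
    _ ≤ (j':ℝ) * η := by rw [hj']; nlinarith
  have h2 : (j':ℝ) * η < z + η := by
    have hc : (j':ℝ) < z/η + 1 := by
      rw [hj']; exact Nat.ceil_lt_add_one (by positivity)
    have : (j':ℝ) * η < (z/η + 1) * η := by nlinarith
    have he : (z/η + 1) * η = z + η := by field_simp
    linarith [he ▸ this]
  have hjN : j' ≤ ⌈1/η⌉₊ + 1 := by
    have hd : z/η ≤ 1/η := by
      have : z ≤ 1 := hz1.le
      gcongr
    have : j' ≤ ⌈1/η⌉₊ := by
      rw [hj']; exact Nat.ceil_le_ceil hd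
    omega
  refine ⟨m * j', by exact Nat.mul_le_mul_left m hjN, ?_⟩
  have hsplit : γ * ((m * j' : ℕ):ℝ) + θ = (η * j' + θ) + ((j' * ⌊γ * (m:ℝ)⌋ : ℤ):ℝ) := by
    have hg : γ * (m:ℝ) = (⌊γ * (m:ℝ)⌋ : ℝ) + η := by rw [hηdef, Int.fract]; ring
    push_cast
    linear_combination (j':ℝ) * hg
  rw [hsplit, Int.fract_add_intCast]
  have hlow : (M0:ℝ) + t0 ≤ η * j' + θ := by nlinarith
  have hhigh : η * j' + θ < (M0:ℝ) + t0 + ε := by nlinarith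
  have hfl : ⌊η * j' + θ⌋ = M0 := by
    rw [Int.floor_eq_iff]; constructor <;> push_cast <;> nlinarith
  rw [Int.fract, hfl]
  constructor
  · push_cast; linarith
  · push_cast; linarith

lemma arc_lemma {β s : ℝ} (hβ0 : 0 < β) (hβ1 : β < 1) (hs0 : 0 < s) (hs1 : s < 1) :
    ∃ t0 ε : ℝ, 0 < ε ∧ 0 ≤ t0 ∧ t0 + ε ≤ 1 ∧ ∀ t, t0 ≤ t → t < t0 + ε →
      ((1 ≤ t + β ∧ Int.fract (t + s) + β < 1) ∨
       (t + β < 1 ∧ 1 ≤ Int.fract (t + s) + β)) := by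
  set ε : ℝ := min (min s (1-s)) (min β (1-β)) / 2 with hεdef
  have hε0 : 0 < ε := by
    apply div_pos _ (by norm_num)
    exact lt_min (lt_min hs0 (by linarith)) (lt_min hβ0 (by linarith))
  have hεs : 2 * ε ≤ s := by
    have := min_le_left (min s (1-s)) (min β (1-β))
    have := min_le_left s (1-s); rw [hεdef]; linarith
  have hεs1 : 2 * ε ≤ 1 - s := by
    have := min_le_left (min s (1-s)) (min β (1-β))
    have := min_le_right s (1-s); rw [hεdef]; linarith
  have hεβ : 2 * ε ≤ β := by
    have := min_le_right (min s (1-s)) (min β (1-β))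
    have := min_le_left β (1-β); rw [hεdef]; linarith
  have hεβ1 : 2 * ε ≤ 1 - β := by
    have := min_le_right (min s (1-s)) (min β (1-β))
    have := min_le_right β (1-β); rw [hεdef]; linarith
  have fract_self : ∀ v : ℝ, 0 ≤ v → v < 1 → Int.fract v = v := fun v h1 h2 =>
    Int.fract_eq_self.mpr ⟨h1, h2⟩
  have fract_shift : ∀ v : ℝ, 1 ≤ v → v < 2 → Int.fract v = v - 1 := by
    intro v h1 h2
    have : v = (v - 1) + ((1:ℤ):ℝ) := by push_cast; ring
    rw [this, Int.fract_add_intCast, fract_self _ (by linarith) (by push_cast; linarith)]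
    push_cast; ring
  rcases le_or_gt s β with hc1 | hc1
  · -- s ≤ β : arc [1-β-ε, 1-β)
    refine ⟨1 - β - ε, ε, hε0, by linarith, by linarith, ?_⟩
    intro t h1 h2
    have hf : Int.fract (t + s) = t + s :=
      fract_self _ (by linarith) (by linarith)
    right
    rw [hf]
    constructor <;> linarith
  · rcases le_or_gt s (1 - β) with hc2 | hc2
    · -- β < s ≤ 1-β : arc [1-ε, 1)
      refine ⟨1 - ε, ε, hε0, by linarith, by linarith, ?_⟩
      intro t h1 h2
      have hf : Int.fract (t + s) = t + s - 1 :=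
        fract_shift _ (by linarith) (by linarith)
      left
      rw [hf]
      constructor <;> linarith
    · -- β < s, 1-β < s : arc [1-β, 1-β+ε)
      refine ⟨1 - β, ε, hε0, by linarith, by linarith, ?_⟩
      intro t h1 h2
      have hf : Int.fract (t + s) = t + s - 1 :=
        fract_shift _ (by linarith) (by linarith)
      left
      rw [hf]
      constructor <;> linarith

/-- The k-kernel of a sequence. -/
def kKernel {A : Type*} (k : ℕ) (x : ℕ → A) : Set (ℕ → A) :=
  {g | ∃ e c : ℕ, c < k ^ e ∧ g = fun n => x (k ^ e * n + c)}

theorem automatic_vs_sturmian (k : ℕ) (hk : 2 ≤ k) (x : ℕ → ℤ)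
    (hx : (kKernel k x).Finite) (α ρ : ℝ) (hα : Irrational α) (a : ℕ → ℤ)
    (ha : ∀ n : ℕ, a n = ⌊α * (n + 1) + ρ⌋ - ⌊α * n + ρ⌋ - ⌊α⌋) :
    ∃ C : ℕ, ∀ (L : ℕ) (w : ℕ → ℤ),
      (∃ m : ℕ, ∀ i < L, w i = x (m + i)) →
      (∃ n : ℕ, ∀ i < L, w i = a (n + i)) →
      L ≤ C := by
  classical
  -- Step 1: pigeonhole on the finite kernel
  obtain ⟨K, c1, c2, hc12, hc2K, hfun⟩ :
      ∃ K c1 c2 : ℕ, c1 < c2 ∧ c2 < K ∧ ∀ t : ℕ, x (K * t + c1) = x (K * t + c2) := by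
    set S := hx.toFinset with hS
    set e := S.card with he
    have hmaps : ∀ c ∈ Finset.range (k ^ e), (fun n => x (k ^ e * n + c)) ∈ S := by
      intro c hc
      rw [hS, Set.Finite.mem_toFinset]
      exact ⟨e, c, Finset.mem_range.mp hc, rfl⟩
    have hcard : S.card < (Finset.range (k ^ e)).card := by
      rw [Finset.card_range, he]
      exact Nat.lt_pow_self hk
    obtain ⟨d1, hd1, d2, hd2, hne, heq⟩ :=
      Finset.exists_ne_map_eq_of_card_lt_of_maps_to hcard hmaps
    rcases Nat.lt_or_ge d1 d2 with hlt | hge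
    · exact ⟨k ^ e, d1, d2, hlt, Finset.mem_range.mp hd2, fun t => congrFun heq t⟩
    · have hlt : d2 < d1 := by omega
      exact ⟨k ^ e, d2, d1, hlt, Finset.mem_range.mp hd1, fun t => congrFun heq.symm t⟩
  set K := K with hKK
  have hK0 : 0 < K := by omega
  set d : ℕ := c2 - c1 with hd
  have hd1 : 1 ≤ d := by omega
  -- Step 2: Sturmian normalization
  set β : ℝ := Int.fract α with hβ
  have hβirr : Irrational β := fract_irrational hα
  have hβ0 : 0 < β :=
    lt_of_le_of_ne (Int.fract_nonneg α) (Ne.symm (by simpa using hβirr.ne_int 0))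
  have hβ1 : β < 1 := Int.fract_lt_one α
  have ha' : ∀ p : ℕ, a p = ⌊β * ((p:ℝ) + 1) + ρ⌋ - ⌊β * p + ρ⌋ := by
    intro p
    have e1 : ∀ q : ℕ, ⌊α * q + ρ⌋ = ⌊β * q + ρ⌋ + ⌊α⌋ * q := by
      intro q
      have hq : α * q + ρ = (β * q + ρ) + ((⌊α⌋ * q : ℤ) : ℝ) := by
        rw [hβ, Int.fract]; push_cast; ring
      rw [hq, Int.floor_add_intCast]
    have e2 := e1 (p + 1)
    have e3 := e1 p
    have hc : ((p:ℝ) + 1) = ((p + 1 : ℕ) : ℝ) := by push_cast; ring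
    rw [ha p, hc, e2, e3]
    push_cast
    ring
  have haval : ∀ p : ℕ, a p = ⌊Int.fract (β * p + ρ) + β⌋ := by
    intro p
    rw [ha' p]
    have hq : β * ((p:ℝ) + 1) + ρ = ((⌊β * p + ρ⌋ : ℤ) : ℝ) + (Int.fract (β * p + ρ) + β) := by
      rw [Int.fract]; push_cast; ring
    rw [hq, Int.floor_intCast_add]
    have : β * (p:ℝ) + ρ = β * p + ρ := rfl
    omega
  -- Step 3: the arc and the rotation
  set s : ℝ := Int.fract (β * d) with hs
  have hsirr : Irrational s := fract_irrational (hβirr.mul_natCast (by omega))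
  have hs0 : 0 < s :=
    lt_of_le_of_ne (Int.fract_nonneg _) (Ne.symm (by simpa using hsirr.ne_int 0))
  have hs1 : s < 1 := Int.fract_lt_one _
  obtain ⟨t0, ε, hε0, ht00, ht01, harc⟩ := arc_lemma hβ0 hβ1 hs0 hs1
  have hγirr : Irrational (β * K) := hβirr.mul_natCast (by omega)
  obtain ⟨N, hN⟩ := rot_hit hγirr ht00 hε0 ht01
  -- Step 4: contradiction setup
  by_contra hcon
  push_neg at hcon
  obtain ⟨L, w, ⟨m, hwx⟩, ⟨n, hwa⟩, hCL⟩ := hcon (K * (N + 2) + d)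
  -- find i0 with m + i0 ≡ c1 (mod K)
  obtain ⟨q, i0, hi0K, hmq⟩ : ∃ q i0 : ℕ, i0 < K ∧ m + i0 = K * q + c1 := by
    have hmod := Nat.div_add_mod m K
    have hmlt : m % K < K := Nat.mod_lt m hK0
    rcases le_or_gt (m % K) c1 with hc | hc
    · exact ⟨m / K, c1 - m % K, by omega, by omega⟩
    · have hr2 : K * (m / K + 1) = K * (m / K) + K := by ring
      exact ⟨m / K + 1, c1 + K - m % K, by omega, by omega⟩
  -- the common-factor equalities
  have haa : ∀ j ≤ N, a (n + (i0 + j * K)) = a (n + (i0 + j * K) + d) := by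
    intro j hj
    have hjK : j * K ≤ N * K := Nat.mul_le_mul_right K hj
    have hCeq : K * (N + 2) + d = N * K + K + K + d := by ring
    have h1 : i0 + j * K < L := by omega
    have h2 : i0 + j * K + d < L := by omega
    have hr : K * (q + j) = K * q + j * K := by ring
    calc a (n + (i0 + j * K)) = w (i0 + j * K) := (hwa _ h1).symm
      _ = x (m + (i0 + j * K)) := hwx _ h1
      _ = x (K * (q + j) + c1) := by congr 1; omega
      _ = x (K * (q + j) + c2) := hfun (q + j)
      _ = x (m + (i0 + j * K + d)) := by congr 1; omega
      _ = w (i0 + j * K + d) := (hwx _ h2).symm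
      _ = a (n + (i0 + j * K + d)) := hwa _ h2
      _ = a (n + (i0 + j * K) + d) := by congr 1; omega
  -- Step 5: hit the arc
  obtain ⟨j, hjN, hjarc⟩ := hN (β * ((n:ℝ) + i0) + ρ)
  set p : ℕ := n + (i0 + j * K) with hp
  have hfr : Int.fract (β * p + ρ) ∈ Set.Ico t0 (t0 + ε) := by
    have : β * (K:ℝ) * j + (β * ((n:ℝ) + i0) + ρ) = β * p + ρ := by
      rw [hp]; push_cast; ring
    rwa [this] at hjarc
  set t : ℝ := Int.fract (β * p + ρ) with ht
  have hts : Int.fract (β * ((p + d : ℕ):ℝ) + ρ) = Int.fract (t + s) := by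
    have hsplit : β * ((p + d : ℕ):ℝ) + ρ =
        (t + s) + ((⌊β * p + ρ⌋ + ⌊β * (d:ℝ)⌋ : ℤ) : ℝ) := by
      rw [ht, hs]; simp only [Int.fract]; push_cast; ring
    rw [hsplit, Int.fract_add_intCast]
  -- Step 6: contradiction
  have hcontra := harc t hfr.1 hfr.2
  have hap : a p = ⌊t + β⌋ := haval p
  have hapd : a (p + d) = ⌊Int.fract (t + s) + β⌋ := by
    rw [haval (p + d), hts]
  have heqa : a p = a (p + d) := by
    rw [hp]
    exact haa j hjN
  have htlt : t < 1 := Int.fract_lt_one _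
  have ht0' : 0 ≤ t := Int.fract_nonneg _
  have hflt : Int.fract (t + s) < 1 := Int.fract_lt_one _
  have hf0 : 0 ≤ Int.fract (t + s) := Int.fract_nonneg _
  rcases hcontra with ⟨hl, hr⟩ | ⟨hl, hr⟩
  · have h1 : ⌊t + β⌋ = 1 := by
      rw [Int.floor_eq_iff] <;> push_cast <;> constructor <;> linarith
    have h0 : ⌊Int.fract (t + s) + β⌋ = 0 := by
      rw [Int.floor_eq_iff] <;> push_cast <;> constructor <;> linarith
    rw [hap, hapd, h1, h0] at heqa
    omega
  · have h1 : ⌊t + β⌋ = 0 := by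
      rw [Int.floor_eq_iff] <;> push_cast <;> constructor <;> linarith
    have h0 : ⌊Int.fract (t + s) + β⌋ = 1 := by
      rw [Int.floor_eq_iff] <;> push_cast <;> constructor <;> linarith
    rw [hap, hapd, h1, h0] at heqa
    omega
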